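/- Let S be a monoid and let X be a class of S-acts closed under coproducts, direct summands and retracts. Let R_X be the class of S-maps with respect to which every act in X is projective, and let U_X be the class of unitary S-monomorphisms f : X → Y with Y∖im(f) ∈ X. Then every S-act has an X-precover if and only if (U_X, R_X) is a weak factorization system and for every S-act X there exists Y ∈ X with hom(Y, X) ≠ ∅. -/

import Mathlib

universe u

/-- A right `S`-act: a set with a right action of the monoid `S`. -/
structure SAct (S : Type u) [Monoid S] : Type (u + 1) where
  carrier : Type u
  act : carrier → S → carrier
  act_one : ∀ a, act a 1 = a
  act_mul : ∀ a s t, act (act a s) t = act a (s * t)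

/-- A map of right `S`-acts. -/
structure SMap {S : Type u} [Monoid S] (A B : SAct S) : Type u where
  toFun : A.carrier → B.carrier
  map_act : ∀ a s, toFun (A.act a s) = B.act (toFun a) s

namespace SMap

variable {S : Type u} [Monoid S]

/-- Composition of `S`-maps. -/
def comp {A B C : SAct S} (g : SMap B C) (f : SMap A B) : SMap A C :=
  ⟨fun a => g.toFun (f.toFun a), fun a s => by
    show g.toFun (f.toFun (A.act a s)) = C.act (g.toFun (f.toFun a)) s
    rw [f.map_act, g.map_act]⟩

/-- The identity `S`-map. -/
def id (A : SAct S) : SMap A A := ⟨fun a => a, fun _ _ => rfl⟩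

end SMap

variable {S : Type u} [Monoid S]

/-- `f` has the left lifting property with respect to `g` (equivalently, `g` has the
right lifting property with respect to `f`). -/
def Lifts {A B C D : SAct S} (f : SMap A B) (g : SMap C D) : Prop :=
  ∀ (u : SMap A C) (v : SMap B D), g.comp u = v.comp f →
    ∃ h : SMap B C, h.comp f = u ∧ g.comp h = v

/-- A class of `S`-maps. -/
def MapClass (S : Type u) [Monoid S] : Type (u + 1) :=
  ∀ {A B : SAct S}, SMap A B → Prop

/-- `C^□`: the class of maps with the right lifting property with respect to every map of `C`. -/
def rlpC (C : MapClass S) : MapClass S :=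
  fun {_ _} g => ∀ {A B : SAct S} (f : SMap A B), C f → Lifts f g

/-- `□C`: the class of maps with the left lifting property with respect to every map of `C`. -/
def llpC (C : MapClass S) : MapClass S :=
  fun {_ _} f => ∀ {C' D : SAct S} (g : SMap C' D), C g → Lifts f g

/-- `cof(C) = □(C^□)`. -/
def cofC (C : MapClass S) : MapClass S := llpC (rlpC C)

/-- `fib(C) = (□C)^□`. -/
def fibC (C : MapClass S) : MapClass S := rlpC (llpC C)

/-- `(L, R)` is a weak factorization system. -/
structure IsWFS (L R : MapClass S) : Prop where
  rlp_eq : ∀ {A B : SAct S} (g : SMap A B), R g ↔ rlpC L g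
  llp_eq : ∀ {A B : SAct S} (f : SMap A B), L f ↔ llpC R f
  factor : ∀ {A B : SAct S} (h : SMap A B),
    ∃ (C : SAct S) (f : SMap A C) (g : SMap C B), L f ∧ R g ∧ g.comp f = h

/-- `g : A → C` is a retract of `f : A → B`:  there are `α : C → B`, `β : B → C` with
`β ∘ α = 1`, `α ∘ g = f` and `β ∘ f = g`. -/
def RetractOfMap {A B C : SAct S} (g : SMap A C) (f : SMap A B) : Prop :=
  ∃ (α : SMap C B) (β : SMap B C),
    β.comp α = SMap.id C ∧ α.comp g = f ∧ β.comp f = g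

/-- The square with sides `f : A → B`, `u : A → X`, `fbar : X → P`, `v : B → P` is a pushout
square (i.e. `fbar` is the pushout of `f` along `u`). -/
structure IsPushoutSq {A B X P : SAct S}
    (f : SMap A B) (u : SMap A X) (fbar : SMap X P) (v : SMap B P) : Prop where
  comm : fbar.comp u = v.comp f
  ue : ∀ ⦃Q : SAct S⦄ (g' : SMap X Q) (v' : SMap B Q), g'.comp u = v'.comp f →
    ∃! k : SMap P Q, k.comp fbar = g' ∧ k.comp v = v'

/-- The square with sides `pr1 : P → D`, `pr2 : P → A`, `g : A → B`, `v : D → B` is a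
pullback square (i.e. `pr1` is the pullback of `g` along `v`). -/
structure IsPullbackSq {P A D B : SAct S}
    (pr1 : SMap P D) (pr2 : SMap P A) (g : SMap A B) (v : SMap D B) : Prop where
  comm : g.comp pr2 = v.comp pr1
  ue : ∀ ⦃Q : SAct S⦄ (q1 : SMap Q D) (q2 : SMap Q A), g.comp q2 = v.comp q1 →
    ∃! k : SMap Q P, pr1.comp k = q1 ∧ pr2.comp k = q2

/-- `f` is an isomorphism of `S`-acts. -/
def IsIsoMap {A B : SAct S} (f : SMap A B) : Prop :=
  ∃ g : SMap B A, g.comp f = SMap.id A ∧ f.comp g = SMap.id B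

/-- A directed system of `S`-acts indexed by the ordinals `< lam`. -/
structure OSeq (S : Type u) [Monoid S] (lam : Ordinal.{u}) where
  obj : ∀ a : Ordinal.{u}, a < lam → SAct S
  map : ∀ (a b : Ordinal.{u}) (hab : a ≤ b) (hb : b < lam),
    SMap (obj a (lt_of_le_of_lt hab hb)) (obj b hb)
  map_id : ∀ (a : Ordinal.{u}) (ha : a < lam), map a a le_rfl ha = SMap.id (obj a ha)
  map_comp : ∀ (a b c : Ordinal.{u}) (hab : a ≤ b) (hbc : b ≤ c) (hc : c < lam),
    (map b c hbc hc).comp (map a b hab (lt_of_le_of_lt hbc hc)) = map a c (le_trans hab hbc) hc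

/-- A cocone over a directed system of `S`-acts indexed by ordinals `< lam`. -/
structure OCocone {lam : Ordinal.{u}} (F : OSeq S lam) where
  pt : SAct S
  ι : ∀ (a : Ordinal.{u}) (ha : a < lam), SMap (F.obj a ha) pt
  fac : ∀ (a b : Ordinal.{u}) (hab : a ≤ b) (hb : b < lam),
    (ι b hb).comp (F.map a b hab hb) = ι a (lt_of_le_of_lt hab hb)

/-- A cocone is a (directed) colimit if it satisfies the universal property. -/
def IsColimitO {lam : Ordinal.{u}} {F : OSeq S lam} (c : OCocone F) : Prop :=
  ∀ d : OCocone F, ∃! k : SMap c.pt d.pt, ∀ (a : Ordinal.{u}) (ha : a < lam),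
    k.comp (c.ι a ha) = d.ι a ha

/-- Restriction of a directed system to the ordinals `< γ`. -/
def OSeq.restrict {lam : Ordinal.{u}} (F : OSeq S lam) (γ : Ordinal.{u}) (hγ : γ ≤ lam) :
    OSeq S γ where
  obj a ha := F.obj a (lt_of_lt_of_le ha hγ)
  map a b hab hb := F.map a b hab (lt_of_lt_of_le hb hγ)
  map_id a ha := F.map_id a _
  map_comp a b c hab hbc hc := F.map_comp a b c hab hbc _

/-- The cocone over the restriction to `γ` with vertex `F.obj γ`. -/
def OSeq.coconeAt {lam : Ordinal.{u}} (F : OSeq S lam) (γ : Ordinal.{u}) (hγ : γ < lam) :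
    OCocone (F.restrict γ hγ.le) where
  pt := F.obj γ hγ
  ι a ha := F.map a γ ha.le hγ
  fac a b hab hb := F.map_comp a b γ hab hb.le hγ

/-- A `λ`-sequence: a directed system of `S`-acts indexed by the ordinals `< λ`, together
with a directed colimit, which is continuous at every limit ordinal `γ ≤ λ`. -/
structure LambdaSequence (S : Type u) [Monoid S] (lam : Ordinal.{u}) where
  seq : OSeq S lam
  cocone : OCocone seq
  isColimit : IsColimitO cocone
  continuity : ∀ (γ : Ordinal.{u}) (hγ : γ < lam), Order.IsSuccLimit γ →
    IsColimitO (seq.coconeAt γ hγ)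

/-- An ordinal `lam` is `γ`-filtered: it is a limit ordinal and every subset of `lam` of
cardinality at most `γ` has supremum `< lam`. -/
def IsGammaFiltered (γ : Cardinal.{u}) (lam : Ordinal.{u}) : Prop :=
  Order.IsSuccLimit lam ∧ ∀ A : Set Ordinal.{u}, A ⊆ Set.Iio lam →
    Cardinal.mk A ≤ Cardinal.lift.{u + 1} γ → sSup A < lam

/-- A split monomorphism. -/
def SplitMonoM {A B : SAct S} (f : SMap A B) : Prop :=
  ∃ γ : SMap B A, γ.comp f = SMap.id A

/-- A split epimorphism. -/
def SplitEpiM {A B : SAct S} (f : SMap A B) : Prop :=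
  ∃ γ : SMap B A, f.comp γ = SMap.id B

/-- A unitary monomorphism of `S`-acts. -/
def IsUnitaryMono {X Y : SAct S} (f : SMap X Y) : Prop :=
  Function.Injective f.toFun ∧
    ∀ (y : Y.carrier) (s : S), Y.act y s ∈ Set.range f.toFun → y ∈ Set.range f.toFun

/-- The class of unitary monomorphisms. -/
def UnitaryClass (S : Type u) [Monoid S] : MapClass S := fun {_ _} f => IsUnitaryMono f

/-- The class of split epimorphisms. -/
def SplitEpiClass (S : Type u) [Monoid S] : MapClass S := fun {_ _} f => SplitEpiM f

/-- `P` is projective with respect to the map `f : A → B`. -/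
def ProjWrt (P : SAct S) {A B : SAct S} (f : SMap A B) : Prop :=
  ∀ g : SMap P B, ∃ h : SMap P A, f.comp h = g

/-- `Q` is a retract of the act `P`. -/
def ActRetract (Q P : SAct S) : Prop :=
  ∃ (α : SMap Q P) (β : SMap P Q), β.comp α = SMap.id Q

/-- The coproduct (disjoint union) of two `S`-acts. -/
def SAct.coprod (A B : SAct S) : SAct S where
  carrier := A.carrier ⊕ B.carrier
  act x s := Sum.elim (fun a => Sum.inl (A.act a s)) (fun b => Sum.inr (B.act b s)) x
  act_one x := by cases x <;> simp [SAct.act_one]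
  act_mul x s t := by cases x <;> simp [SAct.act_mul]

/-- The coproduct (disjoint union) of a family of `S`-acts. -/
def SAct.sigmaCoprod {ι : Type u} (F : ι → SAct S) : SAct S where
  carrier := Σ i, (F i).carrier
  act x s := ⟨x.1, (F x.1).act x.2 s⟩
  act_one x := by cases x with | mk i a => exact congrArg (Sigma.mk i) ((F i).act_one a)
  act_mul x s t := by cases x with | mk i a => exact congrArg (Sigma.mk i) ((F i).act_mul a s t)

/-- The coproduct of a family of `S`-maps. -/
def coprodMap {ι : Type u} {A B : ι → SAct S} (f : ∀ i, SMap (A i) (B i)) :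
    SMap (SAct.sigmaCoprod A) (SAct.sigmaCoprod B) where
  toFun x := ⟨x.1, (f x.1).toFun x.2⟩
  map_act x s := congrArg (Sigma.mk x.1) ((f x.1).map_act x.2 s)

/-- An isomorphism class predicate: `A` and `B` are isomorphic `S`-acts. -/
def ActIso (A B : SAct S) : Prop := ∃ f : SMap A B, Function.Bijective f.toFun

/-- `B` is a direct summand of `A`. -/
def IsDirectSummand (B A : SAct S) : Prop := ∃ C : SAct S, ActIso (SAct.coprod B C) A

/-- The subact of `Y` on a subset `T` closed under the action. -/
def SAct.sub (Y : SAct S) (T : Set Y.carrier) (hT : ∀ t ∈ T, ∀ s : S, Y.act t s ∈ T) :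
    SAct S where
  carrier := {y // y ∈ T}
  act t s := ⟨Y.act t.1 s, hT t.1 t.2 s⟩
  act_one t := Subtype.ext (Y.act_one t.1)
  act_mul t s r := Subtype.ext (Y.act_mul t.1 s r)

/-- A class of `S`-acts. -/
def ActClass (S : Type u) [Monoid S] : Type (u + 1) := SAct S → Prop

/-- The class `R_X` of maps with respect to which every act of `X` is projective. -/
def RXClass (𝒳 : ActClass S) : MapClass S :=
  fun {_ _} f => ∀ P : SAct S, 𝒳 P → ProjWrt P f

/-- The class `U_X` of unitary monomorphisms `f : X → Y` with `Y ∖ im f ∈ X`. -/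
def UXClass (𝒳 : ActClass S) : MapClass S :=
  fun {_ Y} f =>
    ∃ (_ : Function.Injective f.toFun)
      (hu : ∀ (y : Y.carrier) (s : S),
        Y.act y s ∈ Set.range f.toFun → y ∈ Set.range f.toFun),
      𝒳 (Y.sub (Set.range f.toFun)ᶜ (fun t ht s hmem => ht (hu t s hmem)))

/-- Every `S`-act has an `𝒳`-precover. -/
def HasPrecover (𝒳 : ActClass S) (A : SAct S) : Prop :=
  ∃ (P : SAct S) (g : SMap P A), 𝒳 P ∧
    ∀ ⦃P' : SAct S⦄ (g' : SMap P' A), 𝒳 P' → ∃ f : SMap P' P, g.comp f = g'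

/-- A projective `S`-act. -/
def ProjectiveAct (P : SAct S) : Prop :=
  ∀ ⦃A B : SAct S⦄ (f : SMap A B), Function.Surjective f.toFun → ProjWrt P f

/-- The class of all surjective `S`-maps (epimorphisms). -/
def EpiClass (S : Type u) [Monoid S] : MapClass S :=
  fun {_ _} f => Function.Surjective f.toFun

/-- The free `S`-act on `n` generators. -/
def freeAct (S : Type u) [Monoid S] (n : ℕ) : SAct S where
  carrier := Fin n × S
  act p s := (p.1, p.2 * s)
  act_one p := by simp
  act_mul p s t := by simp [mul_assoc]

/-- `r` is a congruence on the `S`-act `A`. -/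
def IsCong (A : SAct S) (r : A.carrier → A.carrier → Prop) : Prop :=
  Equivalence r ∧ ∀ (a b : A.carrier) (s : S), r a b → r (A.act a s) (A.act b s)

/-- A finitely presented `S`-act: a quotient of a finitely generated free act by a
finitely generated congruence. -/
def FinPresented (M : SAct S) : Prop :=
  ∃ (n : ℕ) (q : SMap (freeAct S n) M), Function.Surjective q.toFun ∧
    ∃ (m : ℕ) (p : Fin m → (freeAct S n).carrier × (freeAct S n).carrier),
      (∀ i, q.toFun (p i).1 = q.toFun (p i).2) ∧
      ∀ r : (freeAct S n).carrier → (freeAct S n).carrier → Prop, IsCong (freeAct S n) r →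
        (∀ i, r (p i).1 (p i).2) →
        ∀ x y, q.toFun x = q.toFun y → r x y

/-- A pure epimorphism of `S`-acts. -/
def IsPureEpi {X Y : SAct S} (ψ : SMap X Y) : Prop :=
  Function.Surjective ψ.toFun ∧
    ∀ (M : SAct S), FinPresented M → ∀ f : SMap M Y, ∃ g : SMap M X, ψ.comp g = f

/-- The class of retracts of coproducts of finitely presented acts. -/
def RIFPClass (S : Type u) [Monoid S] : ActClass S :=
  fun A => ∃ (ι : Type u) (F : ι → SAct S),
    (∀ i, FinPresented (F i)) ∧ ActRetract A (SAct.sigmaCoprod F)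

/-- The one-element `S`-act. -/
def oneAct (S : Type u) [Monoid S] : SAct S :=
  ⟨PUnit, fun _ _ => PUnit.unit, fun _ => rfl, fun _ _ _ => rfl⟩

/-- The unique map to the one-element act. -/
def bangMap (A : SAct S) : SMap A (oneAct S) := ⟨fun _ => PUnit.unit, fun _ _ => rfl⟩

/-- The monoid `S` as a right `S`-act. -/
def regAct (S : Type u) [Monoid S] : SAct S := ⟨S, fun a s => a * s, mul_one, mul_assoc⟩

/-- The set of fixed points of an `S`-act. -/
def FixSet (A : SAct S) : Set A.carrier := {a | ∀ s : S, A.act a s = a}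

/-- The Rees quotient of `Y` collapsing the subset `T` (closed under the action) to a point. -/
def reesQuot (Y : SAct S) (T : Set Y.carrier) (hT : ∀ t ∈ T, ∀ s : S, Y.act t s ∈ T) :
    SAct S where
  carrier := Quot (fun a b => a = b ∨ (a ∈ T ∧ b ∈ T))
  act q s := Quot.lift (fun y => Quot.mk _ (Y.act y s))
    (fun a b hab => by
      rcases hab with h | ⟨ha, hb⟩
      · rw [h]
      · exact Quot.sound (Or.inr ⟨hT a ha s, hT b hb s⟩)) q
  act_one q := by
    induction q using Quot.ind with
    | _ y => exact congrArg (Quot.mk _) (Y.act_one y)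
  act_mul q s t := by
    induction q using Quot.ind with
    | _ y => exact congrArg (Quot.mk _) (Y.act_mul y s t)

/-- The class of monomorphisms whose Rees quotient lies in `𝒳`. -/
def XMonoClass (𝒳 : ActClass S) : MapClass S :=
  fun {X Y} f =>
    Function.Injective f.toFun ∧
      𝒳 (reesQuot Y (Set.range f.toFun)
        (fun t ht s => by
          obtain ⟨x, rfl⟩ := ht
          exact ⟨X.act x s, f.map_act x s⟩))

/-- The type of all `S`-maps (arrows). -/
def ArrowCls (S : Type u) [Monoid S] : Type (u + 1) := Σ (A B : SAct S), SMap A B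

/-- The class of pushouts of maps in `𝒞`. -/
def pushoutsOf (𝒞 : MapClass S) : MapClass S :=
  fun {X P} fbar => ∃ (A B : SAct S) (f : SMap A B) (u : SMap A X) (v : SMap B P),
    𝒞 f ∧ IsPushoutSq f u fbar v

/-- `h` is a transfinite composition of maps in `𝒟`. -/
def IsTransfiniteCompOf (𝒟 : MapClass S) {A L : SAct S} (h : SMap A L) : Prop :=
  ∃ (lam : Ordinal.{u}), Ordinal.omega0 ≤ lam ∧
    ∃ (Φ : LambdaSequence S lam) (h0 : (0 : Ordinal.{u}) < lam),
      (∀ (b : Ordinal.{u}) (hb : b + 1 < lam),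
        𝒟 (Φ.seq.map b (b + 1) (le_self_add : b ≤ b + 1) hb)) ∧
      Φ.seq.obj 0 h0 = A ∧ Φ.cocone.pt = L ∧ HEq (Φ.cocone.ι 0 h0) h

/-- `ret(𝒞)`: retracts of transfinite compositions of pushouts of maps in `𝒞`. -/
def retClass (𝒞 : MapClass S) : MapClass S :=
  fun {A _} g => ∃ (B : SAct S) (f : SMap A B),
    IsTransfiniteCompOf (pushoutsOf 𝒞) f ∧ RetractOfMap g f

/-- The class of pure epimorphisms. -/
def PureEpiClass (S : Type u) [Monoid S] : MapClass S := fun {_ _} f => IsPureEpi f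

/-- The subact `{z}` of `S`, for a left zero `z`. -/
def zSub (z : S) (hz : ∀ s : S, z * s = z) : SAct S :=
  (regAct S).sub {z} (fun t ht s => by
    have ht' : t = z := ht
    show (regAct S).act t s = z
    rw [ht']; exact hz s)

/-- The inclusion `{z} → S`, for a left zero `z`. -/
def zIncl (z : S) (hz : ∀ s : S, z * s = z) : SMap (zSub z hz) (regAct S) :=
  ⟨fun t => t.1, fun _ _ => rfl⟩

/-- The subact `K_d = g⁻¹(d)` of `C`, for a fixed point `d` of `D`. -/
def kerAct {C D : SAct S} (g : SMap C D) (d : D.carrier) (hd : d ∈ FixSet D) : SAct S :=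
  C.sub {c | g.toFun c = d} (fun c hc s => by
    simp only [Set.mem_setOf_eq] at hc ⊢
    rw [g.map_act, hc]
    exact hd s)

/-- A centred `S`-act: an act with exactly one fixed point. -/
def CAct (S : Type u) [Monoid S] : Type (u + 1) :=
  {A : SAct S // ∃! a : A.carrier, ∀ s : S, A.act a s = a}

/-- A class of maps of centred `S`-acts. -/
abbrev MapClassC (S : Type u) [Monoid S] : Type (u + 1) :=
  ∀ (A B : CAct S), SMap A.1 B.1 → Prop

/-- `C^□` in the category of centred `S`-acts. -/
def rlpCC (𝒞 : MapClassC S) : MapClassC S :=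
  fun _ _ g => ∀ (X Y : CAct S) (f : SMap X.1 Y.1), 𝒞 X Y f → Lifts f g

/-- `□C` in the category of centred `S`-acts. -/
def llpCC (𝒞 : MapClassC S) : MapClassC S :=
  fun _ _ f => ∀ (X Y : CAct S) (g : SMap X.1 Y.1), 𝒞 X Y g → Lifts f g

/-- A weak factorization system in the category of centred `S`-acts. -/
structure IsWFSC (L R : MapClassC S) : Prop where
  rlp_eq : ∀ (A B : CAct S) (g : SMap A.1 B.1), R A B g ↔ rlpCC L A B g
  llp_eq : ∀ (A B : CAct S) (f : SMap A.1 B.1), L A B f ↔ llpCC R A B f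
  factor : ∀ (A B : CAct S) (h : SMap A.1 B.1),
    ∃ (C : CAct S) (f : SMap A.1 C.1) (g : SMap C.1 B.1), L A C f ∧ R C B g ∧ g.comp f = h

/-- The one-element centred `S`-act `0`. -/
def oneCAct (S : Type u) [Monoid S] : CAct S :=
  ⟨oneAct S, PUnit.unit, fun _ => rfl, fun _ _ => rfl⟩

/-- The unique map `0 → X` of centred `S`-acts. -/
noncomputable def zeroTo (X : CAct S) : SMap (oneCAct S).1 X.1 :=
  ⟨fun _ => X.2.choose, fun _ s => (X.2.choose_spec.1 s).symm⟩

/-! ### Auxiliary material for the proof -/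

theorem SMap.ext' {A B : SAct S} {f g : SMap A B}
    (h : ∀ a, f.toFun a = g.toFun a) : f = g := by
  cases f; cases g
  simp only [SMap.mk.injEq]
  exact funext h

theorem SMap.congr_toFun {A B : SAct S} {f g : SMap A B} (h : f = g) (a : A.carrier) :
    f.toFun a = g.toFun a := by rw [h]

/-- The part of a coproduct complementary to `inl` is a retract of the second summand. -/
theorem sub_retract_inr (A P : SAct S) (T : Set (SAct.coprod A P).carrier)
    (hT : ∀ t ∈ T, ∀ s : S, (SAct.coprod A P).act t s ∈ T)
    (hTeq : ∀ x ∈ T, ∃ p : P.carrier, x = Sum.inr p)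
    (hTr : ∀ p : P.carrier, (Sum.inr p : (SAct.coprod A P).carrier) ∈ T) :
    ActRetract ((SAct.coprod A P).sub T hT) P := by
  set E : SAct S := (SAct.coprod A P).sub T hT with hE
  have hex : ∀ z : E.carrier, ∃ p : P.carrier, z.1 = Sum.inr p := fun z => hTeq z.1 z.2
  refine ⟨⟨fun z => Classical.choose (hex z), ?_⟩,
    ⟨fun p => ⟨Sum.inr p, hTr p⟩, fun p s => rfl⟩, ?_⟩
  · intro z s
    have e2 := Classical.choose_spec (hex (E.act z s))
    have e3 : (E.act z s).1 = Sum.inr (P.act (Classical.choose (hex z)) s) :=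
      congrArg (fun w => (SAct.coprod A P).act w s) (Classical.choose_spec (hex z))
    exact Sum.inr.inj (e2.symm.trans e3)
  · apply SMap.ext'
    intro z
    exact Subtype.ext (Classical.choose_spec (hex z)).symm


/-- The main lifting lemma: every `U_X` map lifts against every `R_X` map. -/
theorem lifts_of_UX_RX {𝒳 : ActClass S} {X Y A B : SAct S} {f : SMap X Y} {g : SMap A B}
    (hf : UXClass 𝒳 f) (hg : RXClass 𝒳 g) : Lifts f g := by
  classical
  obtain ⟨hinj, hu, hX⟩ := hf
  intro u v hsq
  have hsq' : ∀ x, g.toFun (u.toFun x) = v.toFun (f.toFun x) := fun x =>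
    SMap.congr_toFun hsq x
  set D : SAct S := Y.sub (Set.range f.toFun)ᶜ (fun t ht s hmem => ht (hu t s hmem)) with hD
  obtain ⟨k, hk⟩ := hg D hX ⟨fun d => v.toFun d.1, fun d s => v.map_act d.1 s⟩
  have hk' : ∀ d : D.carrier, g.toFun (k.toFun d) = v.toFun d.1 := fun d =>
    SMap.congr_toFun hk d
  have hnotin : ∀ (y : Y.carrier), y ∉ Set.range f.toFun → ∀ (s : S),
      Y.act y s ∉ Set.range f.toFun := fun y hy s hmem => hy (hu y s hmem)
  refine ⟨⟨fun y => if hy : y ∈ Set.range f.toFun then u.toFun (Classical.choose hy)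
      else k.toFun ⟨y, hy⟩, ?_⟩, ?_, ?_⟩
  · intro y s
    show (if hy : Y.act y s ∈ Set.range f.toFun then u.toFun (Classical.choose hy)
        else k.toFun ⟨Y.act y s, hy⟩) =
      A.act (if hy : y ∈ Set.range f.toFun then u.toFun (Classical.choose hy)
        else k.toFun ⟨y, hy⟩) s
    by_cases hy : y ∈ Set.range f.toFun
    · have hx0 : f.toFun (Classical.choose hy) = y := Classical.choose_spec hy
      have hy' : Y.act y s ∈ Set.range f.toFun :=
        ⟨X.act (Classical.choose hy) s, by rw [f.map_act, hx0]⟩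
      rw [dif_pos hy', dif_pos hy]
      have hch : Classical.choose hy' = X.act (Classical.choose hy) s := by
        apply hinj
        rw [Classical.choose_spec hy', f.map_act, hx0]
      rw [hch]
      exact u.map_act _ s
    · have hy' := hnotin y hy s
      rw [dif_neg hy', dif_neg hy]
      exact k.map_act ⟨y, hy⟩ s
  · apply SMap.ext'
    intro x
    show (if hy : f.toFun x ∈ Set.range f.toFun then u.toFun (Classical.choose hy)
        else k.toFun ⟨f.toFun x, hy⟩) = u.toFun x
    have hx : f.toFun x ∈ Set.range f.toFun := Set.mem_range_self x
    rw [dif_pos hx]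
    exact congrArg u.toFun (hinj (Classical.choose_spec hx))
  · apply SMap.ext'
    intro y
    show g.toFun (if hy : y ∈ Set.range f.toFun then u.toFun (Classical.choose hy)
        else k.toFun ⟨y, hy⟩) = v.toFun y
    by_cases hy : y ∈ Set.range f.toFun
    · rw [dif_pos hy, hsq', Classical.choose_spec hy]
    · rw [dif_neg hy]; exact hk' ⟨y, hy⟩

/-- The empty `S`-act. -/
def emptyAct (S : Type u) [Monoid S] : SAct S :=
  ⟨PEmpty, fun a _ => a.elim, fun a => a.elim, fun a _ _ => a.elim⟩

/-- The unique map from the empty act. -/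
def emptyTo (A : SAct S) : SMap (emptyAct S) A :=
  ⟨fun a => a.elim, fun a _ => a.elim⟩

theorem emptyTo_UX {𝒳 : ActClass S}
    (hret : ∀ A B : SAct S, ActRetract B A → 𝒳 A → 𝒳 B)
    {P : SAct S} (hP : 𝒳 P) : UXClass 𝒳 (emptyTo P) := by
  refine ⟨fun a => a.elim, fun y s hm => hm.choose.elim, ?_⟩
  refine hret P _ ⟨⟨fun z => z.1, fun z s => rfl⟩,
    ⟨fun p => ⟨p, fun hm => hm.choose.elim⟩, fun p s => rfl⟩, ?_⟩ hP
  apply SMap.ext'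
  intro z
  rfl

theorem RX_of_rlp {𝒳 : ActClass S}
    (hret : ∀ A B : SAct S, ActRetract B A → 𝒳 A → 𝒳 B)
    {A B : SAct S} {g : SMap A B} (h : rlpC (UXClass 𝒳) g) : RXClass 𝒳 g := by
  intro P hP t
  obtain ⟨l, _, hl⟩ := h (emptyTo P) (emptyTo_UX hret hP) (emptyTo A) t
    (SMap.ext' (fun a => a.elim))
  exact ⟨l, hl⟩

/-- Factorization through a precover. -/
theorem factor_UX_RX {𝒳 : ActClass S}
    (hret : ∀ A B : SAct S, ActRetract B A → 𝒳 A → 𝒳 B)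
    (hpre : ∀ A : SAct S, HasPrecover 𝒳 A) {A B : SAct S} (h : SMap A B) :
    ∃ (C : SAct S) (f : SMap A C) (g : SMap C B),
      UXClass 𝒳 f ∧ RXClass 𝒳 g ∧ g.comp f = h := by
  obtain ⟨P, g0, hP, hprec⟩ := hpre B
  refine ⟨SAct.coprod A P, ⟨Sum.inl, fun a s => rfl⟩,
    ⟨Sum.elim h.toFun g0.toFun, ?_⟩, ⟨fun a b hab => Sum.inl.inj hab, ?_, ?_⟩, ?_, ?_⟩
  · intro x s
    cases x with
    | inl a => exact h.map_act a s
    | inr p => exact g0.map_act p s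
  · intro y s hm
    cases y with
    | inl a => exact ⟨a, rfl⟩
    | inr p =>
      obtain ⟨x, hx⟩ := hm
      exact absurd hx (fun hh => Sum.inl_ne_inr hh)
  · -- the complement of `inl` is a retract of `P`
    refine hret P _ (sub_retract_inr A P _ _ ?_ ?_) hP
    · intro x hx
      cases x with
      | inl a => exact (hx ⟨a, rfl⟩).elim
      | inr p => exact ⟨p, rfl⟩
    · intro p hm
      obtain ⟨a, ha⟩ := hm
      exact Sum.inl_ne_inr ha
  · intro Q hQ t
    obtain ⟨l, hl⟩ := hprec t hQ
    exact ⟨⟨fun q => Sum.inr (l.toFun q), fun q s => congrArg Sum.inr (l.map_act q s)⟩,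
      SMap.ext' fun q => SMap.congr_toFun hl q⟩
  · exact SMap.ext' fun a => rfl

/-- Maps with the left lifting property against `R_X` are `X`-unitary monos. -/
theorem UX_of_llp {𝒳 : ActClass S}
    (hds : ∀ A B : SAct S, IsDirectSummand B A → 𝒳 A → 𝒳 B)
    (hret : ∀ A B : SAct S, ActRetract B A → 𝒳 A → 𝒳 B)
    (hpre : ∀ A : SAct S, HasPrecover 𝒳 A)
    {X Y : SAct S} {f : SMap X Y} (hf : llpC (RXClass 𝒳) f) : UXClass 𝒳 f := by
  obtain ⟨P, g0, hP, hprec⟩ := hpre Y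
  set C : SAct S := SAct.coprod X P with hCdef
  have gact : ∀ (x : C.carrier) (s : S),
      Sum.elim f.toFun g0.toFun (C.act x s) = Y.act (Sum.elim f.toFun g0.toFun x) s := by
    intro x s
    cases x with
    | inl a => exact f.map_act a s
    | inr p => exact g0.map_act p s
  set g : SMap C Y := ⟨Sum.elim f.toFun g0.toFun, gact⟩ with hgdef
  have hg : RXClass 𝒳 g := by
    intro Q hQ t
    obtain ⟨l, hl⟩ := hprec t hQ
    exact ⟨⟨fun q => Sum.inr (l.toFun q), fun q s => congrArg Sum.inr (l.map_act q s)⟩,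
      SMap.ext' fun q => SMap.congr_toFun hl q⟩
  obtain ⟨h, hh1, hh2⟩ := hf g hg ⟨Sum.inl, fun a s => rfl⟩ (SMap.id Y)
    (SMap.ext' fun x => rfl)
  have hh1' : ∀ x, h.toFun (f.toFun x) = Sum.inl x := fun x => SMap.congr_toFun hh1 x
  have hh2' : ∀ y, g.toFun (h.toFun y) = y := fun y => SMap.congr_toFun hh2 y
  have hinj : Function.Injective f.toFun := by
    intro a b hab
    have h1 := hh1' a
    rw [hab, hh1' b] at h1
    exact (Sum.inl.inj h1).symm
  have hu : ∀ (y : Y.carrier) (s : S), Y.act y s ∈ Set.range f.toFun →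
      y ∈ Set.range f.toFun := by
    intro y s hm
    obtain ⟨x, hx⟩ := hm
    rcases hy : h.toFun y with a | p
    · refine ⟨a, ?_⟩
      have h2 := hh2' y
      rw [hy] at h2
      exact h2
    · exfalso
      have e1 : h.toFun (Y.act y s) = Sum.inl x := by rw [← hx, hh1']
      have e2 : h.toFun (Y.act y s) = Sum.inr (P.act p s) := by
        rw [h.map_act, hy]; rfl
      rw [e1] at e2
      exact Sum.inl_ne_inr e2
  refine ⟨hinj, hu, ?_⟩
  set D : SAct S := Y.sub (Set.range f.toFun)ᶜ (fun t ht s hmem => ht (hu t s hmem)) with hDdef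
  -- the two complementary subacts of P
  have h2sub : ∀ p ∈ {p : P.carrier | g0.toFun p ∉ Set.range f.toFun}, ∀ s : S,
      P.act p s ∈ {p : P.carrier | g0.toFun p ∉ Set.range f.toFun} := by
    intro p hp s hmem
    rw [g0.map_act] at hmem
    exact hp (hu _ s hmem)
  have h1sub : ∀ p ∈ {p : P.carrier | g0.toFun p ∈ Set.range f.toFun}, ∀ s : S,
      P.act p s ∈ {p : P.carrier | g0.toFun p ∈ Set.range f.toFun} := by
    intro p hp s
    obtain ⟨x, hx⟩ := hp
    refine ⟨X.act x s, ?_⟩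
    rw [g0.map_act, ← hx, f.map_act]
  set P2 : SAct S := P.sub _ h2sub with hP2def
  set P1 : SAct S := P.sub _ h1sub with hP1def
  have hXP2 : 𝒳 P2 := by
    refine hds P P2 ⟨P1, ⟨⟨Sum.elim Subtype.val Subtype.val, ?_⟩, ?_, ?_⟩⟩ hP
    · intro x s
      cases x with
      | inl a => rfl
      | inr b => rfl
    · intro x y hab
      rcases x with a | a <;> rcases y with b | b
      · exact congrArg Sum.inl (Subtype.ext hab)
      · exact absurd (show g0.toFun a.1 ∈ Set.range f.toFun by
          have hv : (a.1 : P.carrier) = b.1 := hab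
          rw [hv]; exact b.2) a.2
      · exact absurd (show g0.toFun b.1 ∈ Set.range f.toFun by
          have hv : (a.1 : P.carrier) = b.1 := hab
          rw [← hv]; exact a.2) b.2
      · exact congrArg Sum.inr (Subtype.ext hab)
    · intro p
      by_cases hp : g0.toFun p ∈ Set.range f.toFun
      · exact ⟨Sum.inr ⟨p, hp⟩, rfl⟩
      · exact ⟨Sum.inl ⟨p, hp⟩, rfl⟩
  -- D is a retract of P2
  have hex : ∀ d : D.carrier, ∃ p : P.carrier, h.toFun d.1 = Sum.inr p := by
    intro d
    rcases hc : h.toFun d.1 with a | p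
    · exfalso
      refine d.2 ⟨a, ?_⟩
      have h2 := hh2' d.1
      rw [hc] at h2
      exact h2
    · exact ⟨p, rfl⟩
  have hval : ∀ d : D.carrier, g0.toFun (Classical.choose (hex d)) = d.1 := by
    intro d
    have h2 := hh2' d.1
    rw [Classical.choose_spec (hex d)] at h2
    exact h2
  have hmem2 : ∀ d : D.carrier,
      g0.toFun (Classical.choose (hex d)) ∉ Set.range f.toFun := by
    intro d
    rw [hval d]
    exact d.2
  refine hret P2 _ ⟨⟨fun d => ⟨Classical.choose (hex d), hmem2 d⟩, ?_⟩,
    ⟨fun p => ⟨g0.toFun p.1, p.2⟩, fun p s => Subtype.ext (g0.map_act p.1 s)⟩, ?_⟩ hXP2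
  · intro d s
    apply Subtype.ext
    have e1 := Classical.choose_spec (hex (D.act d s))
    have e2 : h.toFun ((D.act d s).1) = Sum.inr (P.act (Classical.choose (hex d)) s) :=
      (h.map_act d.1 s).trans
        (congrArg (fun w => C.act w s) (Classical.choose_spec (hex d)))
    exact Sum.inr.inj (e1.symm.trans e2)
  · apply SMap.ext'
    intro d
    exact Subtype.ext (hval d)


theorem statement11 (𝒳 : ActClass S)
    (hcop : ∀ (ι : Type u) (F : ι → SAct S), (∀ i, 𝒳 (F i)) → 𝒳 (SAct.sigmaCoprod F))
    (hds : ∀ A B : SAct S, IsDirectSummand B A → 𝒳 A → 𝒳 B)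
    (hret : ∀ A B : SAct S, ActRetract B A → 𝒳 A → 𝒳 B) :
    (∀ A : SAct S, HasPrecover 𝒳 A) ↔
      (IsWFS (UXClass 𝒳) (RXClass 𝒳) ∧
        ∀ A : SAct S, ∃ Y : SAct S, 𝒳 Y ∧ Nonempty (SMap Y A)) := by
  constructor
  · intro hpre
    refine ⟨⟨?_, ?_, ?_⟩, ?_⟩
    · intro A B g
      constructor
      · intro hg X' Y' f hf
        exact lifts_of_UX_RX hf hg
      · intro hg
        exact RX_of_rlp hret hg
    · intro A B f
      constructor
      · intro hf C D g hg
        exact lifts_of_UX_RX hf hg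
      · intro hf
        exact UX_of_llp hds hret hpre hf
    · intro A B h
      exact factor_UX_RX hret hpre h
    · intro A
      obtain ⟨P, g, hP, _⟩ := hpre A
      exact ⟨P, hP, ⟨g⟩⟩
  · rintro ⟨hwfs, hhom⟩ A
    classical
    obtain ⟨Y, hY, ⟨t⟩⟩ := hhom A
    obtain ⟨C, f, g, hfU, hgR, _⟩ := hwfs.factor t
    obtain ⟨hinj, hu, hcomp⟩ := hfU
    -- C is in 𝒳 : it is a retract of the coproduct of Y and the complement of f
    set Dc : SAct S := C.sub (Set.range f.toFun)ᶜ (fun t' ht s hmem => ht (hu t' s hmem))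
      with hDc
    set F : ULift.{u} Bool → SAct S := fun b => cond b.down Y Dc with hF
    have hXF : ∀ i, 𝒳 (F i) := by
      rintro ⟨b⟩
      cases b
      · exact hcomp
      · exact hY
    have hXsig : 𝒳 (SAct.sigmaCoprod F) := hcop _ F hXF
    have hXC : 𝒳 C := by
      set α : C.carrier → (SAct.sigmaCoprod F).carrier := fun c =>
        if hc : c ∈ Set.range f.toFun then ⟨⟨true⟩, Classical.choose (Set.mem_range.mp hc)⟩
        else ⟨⟨false⟩, ⟨c, hc⟩⟩ with hα
      have hαp : ∀ c (hc : c ∈ Set.range f.toFun),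
          α c = ⟨⟨true⟩, Classical.choose (Set.mem_range.mp hc)⟩ := fun c hc => dif_pos hc
      have hαn : ∀ c (hc : c ∉ Set.range f.toFun), α c = ⟨⟨false⟩, ⟨c, hc⟩⟩ :=
        fun c hc => dif_neg hc
      refine hret (SAct.sigmaCoprod F) C ⟨⟨α, ?_⟩,
        ⟨fun z => Sum.elim id id (match z with
          | ⟨⟨true⟩, y⟩ => Sum.inl (f.toFun y)
          | ⟨⟨false⟩, d⟩ => Sum.inr d.1), ?_⟩, ?_⟩ hXsig
      · intro c s
        show α (C.act c s) = (SAct.sigmaCoprod F).act (α c) s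
        by_cases hc : c ∈ Set.range f.toFun
        · have hx0 : f.toFun (Classical.choose hc) = c := Classical.choose_spec hc
          have hc' : C.act c s ∈ Set.range f.toFun :=
            ⟨Y.act (Classical.choose hc) s, by rw [f.map_act, hx0]⟩
          rw [hαp _ hc', hαp _ hc]
          have hch : Classical.choose hc' = Y.act (Classical.choose hc) s := by
            apply hinj
            rw [Classical.choose_spec hc', f.map_act, hx0]
          exact congrArg (Sigma.mk (ULift.up true)) hch
        · have hc' : C.act c s ∉ Set.range f.toFun := fun hmem => hc (hu c s hmem)
          rw [hαn _ hc', hαn _ hc]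
          rfl
      · rintro ⟨⟨b⟩, x⟩ s
        cases b
        · exact rfl
        · exact f.map_act x s
      · apply SMap.ext'
        intro c
        dsimp only [SMap.comp, SMap.id]
        by_cases hc : c ∈ Set.range f.toFun
        · rw [hαp c hc]
          exact Classical.choose_spec hc
        · rw [hαn c hc]
          rfl
    exact ⟨C, g, hXC, fun P' g' hP' => hgR P' hP' g'⟩
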